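/- One-stage progress bound for HOPS: under the setup of the previous recursion, suppose additionally the APG subroutine run for t iterations from x_{s−1} on the smoothed objective guarantees F(x_s) − F(x†_{s−1,ε}) ≤ D²μ_s/2 + 2‖A‖²‖x_{s−1} − x†_{s−1,ε}‖²/(μ_s t²), with μ_s = ε_s/D² where ε_s = ε_{s−1}/b, and t ≥ 2bcD‖A‖/ε^{1−θ}. Then F(x_s) − F_* ≤ ε + ε_s. -/

import Mathlib

set_option maxHeartbeats 1000000


/-- One-stage progress bound for HOPS. Under the local error bound and with
the APG guarantee
`F x_s - F xdag ≤ D² μ_s / 2 + 2‖A‖² ‖x_{s-1} - xdag‖² / (μ_s t²)`,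
where `μ_s = ε_s/D²`, `ε_s = ε_{s-1}/b`, and `t ≥ 2 b c D ‖A‖ / ε^(1-θ)`, if
`F x_{s-1} - Fstar ≤ ε_{s-1} + ε` then `F x_s - Fstar ≤ ε + ε_s`. -/
theorem hops_one_stage_progress
    {d : ℕ} (F : EuclideanSpace ℝ (Fin d) → ℝ)
    (hF : ConvexOn ℝ Set.univ F)
    (Ωstar : Set (EuclideanSpace ℝ (Fin d))) (Fstar : ℝ)
    (hΩ : Ωstar = {z | ∀ y, F z ≤ F y})
    (hΩne : Ωstar.Nonempty) (hΩconv : Convex ℝ Ωstar) (hΩcpt : IsCompact Ωstar)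
    (hFstar : ∀ z ∈ Ωstar, F z = Fstar)
    (θ c : ℝ) (hθ0 : 0 < θ) (hθ1 : θ ≤ 1) (hc : 0 < c)
    (ε : ℝ) (hε : 0 < ε)
    (hLEB : ∀ x ∈ {z | F z ≤ Fstar + ε},
      Metric.infDist x Ωstar ≤ c * (F x - Fstar) ^ θ)
    (b : ℝ) (hb : 1 < b)
    (D normA : ℝ) (hD : 0 < D) (hA : 0 < normA)
    (εprev εs μs : ℝ) (hεprev : 0 < εprev) (hεsdef : εs = εprev / b)
    (hμs : μs = εs / D ^ 2)
    (t : ℝ) (ht : t ≥ 2 * b * c * D * normA / ε ^ (1 - θ))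
    (xprev xs xdag : EuclideanSpace ℝ (Fin d))
    (hupper : F xprev - Fstar ≤ εprev + ε)
    (hmem : xdag ∈ {z | F z ≤ Fstar + ε})
    (hproj : ∀ z ∈ {z : EuclideanSpace ℝ (Fin d) | F z ≤ Fstar + ε},
      ‖xdag - xprev‖ ≤ ‖z - xprev‖)
    (hAPG : F xs - F xdag ≤ D ^ 2 * μs / 2 + 2 * normA ^ 2 * ‖xprev - xdag‖ ^ 2 / (μs * t ^ 2)) :
    F xs - Fstar ≤ ε + εs := by
  have hb0 : (0:ℝ) < b := lt_trans one_pos hb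
  have hεs : 0 < εs := by rw [hεsdef]; positivity
  have hμ : 0 < μs := by rw [hμs]; positivity
  have hE : (0:ℝ) < ε ^ θ := Real.rpow_pos_of_pos hε θ
  have hE' : (0:ℝ) < ε ^ (1 - θ) := Real.rpow_pos_of_pos hε _
  have hEE : ε ^ (1 - θ) * ε ^ θ = ε := by
    rw [← Real.rpow_add hε]; norm_num
  have htpos : 0 < t := lt_of_lt_of_le (by positivity) ht
  obtain ⟨z0, hz0⟩ := hΩne
  have hz0min : ∀ y, F z0 ≤ F y := by rw [hΩ] at hz0; exact hz0
  have hFs_le : Fstar ≤ F xdag := (hFstar z0 hz0) ▸ hz0min xdag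
  have hmem' : F xdag ≤ Fstar + ε := hmem
  have hterm1 : D ^ 2 * μs / 2 = εs / 2 := by rw [hμs]; field_simp
  set d0 := ‖xprev - xdag‖ with hd0def
  have hd0nn : 0 ≤ d0 := norm_nonneg _
  -- key distance bound: d0 * ε ≤ c * εprev * ε^θ
  have hd0 : d0 * ε ≤ c * εprev * ε ^ θ := by
    by_cases hcase : F xprev ≤ Fstar + ε
    · have h0 : ‖xdag - xprev‖ ≤ 0 := by simpa using hproj xprev hcase
      have hz : d0 = 0 := by
        rw [hd0def, norm_sub_rev]
        exact le_antisymm h0 (norm_nonneg _)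
      rw [hz]
      have : (0:ℝ) ≤ c * εprev * ε ^ θ := by positivity
      linarith
    · push_neg at hcase
      set Δ := F xprev - Fstar with hΔdef
      have hΔε : ε < Δ := by simp only [hΔdef]; linarith
      have hΔ0 : 0 < Δ := lt_trans hε hΔε
      set s := ε / Δ with hsdef
      have hs0 : 0 < s := div_pos hε hΔ0
      have hs1 : s < 1 := (div_lt_one hΔ0).2 hΔε
      have hsΔ : s * Δ = ε := div_mul_cancel₀ ε (ne_of_gt hΔ0)
      obtain ⟨xstar, hxstar, hdist⟩ :=
        hΩcpt.exists_infDist_eq_dist ⟨z0, hz0⟩ xdag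
      have hR : ‖xdag - xstar‖ ≤ c * ε ^ θ := by
        have h1 := hLEB xdag hmem
        have h2 : (F xdag - Fstar) ^ θ ≤ ε ^ θ :=
          Real.rpow_le_rpow (by linarith) (by linarith) (le_of_lt hθ0)
        have h3 : c * (F xdag - Fstar) ^ θ ≤ c * ε ^ θ :=
          mul_le_mul_of_nonneg_left h2 (le_of_lt hc)
        calc ‖xdag - xstar‖ = dist xdag xstar := (dist_eq_norm _ _).symm
          _ = Metric.infDist xdag Ωstar := hdist.symm
          _ ≤ c * (F xdag - Fstar) ^ θ := h1
          _ ≤ c * ε ^ θ := h3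
      set y := (1 - s) • xstar + s • xprev with hydef
      have hFy : F y ≤ Fstar + ε := by
        have hcv := hF.2 (Set.mem_univ xstar) (Set.mem_univ xprev)
          (by linarith : (0:ℝ) ≤ 1 - s) (le_of_lt hs0) (by ring)
        have hFx : F xstar = Fstar := hFstar xstar hxstar
        calc F y ≤ (1 - s) * F xstar + s * F xprev := hcv
          _ = Fstar + s * Δ := by rw [hFx]; simp only [hΔdef]; ring
          _ = Fstar + ε := by rw [hsΔ]
      have hproj_y := hproj y hFy
      have hyx : y - xprev = (1 - s) • (xstar - xprev) := by
        rw [hydef]; module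
      have hny : ‖y - xprev‖ = (1 - s) * ‖xstar - xprev‖ := by
        rw [hyx, norm_smul, Real.norm_eq_abs, abs_of_nonneg (by linarith)]
      have htri : ‖xstar - xprev‖ ≤ ‖xdag - xstar‖ + d0 := by
        have := norm_sub_le_norm_sub_add_norm_sub xstar xdag xprev
        calc ‖xstar - xprev‖ = ‖xprev - xstar‖ := norm_sub_rev _ _
          _ ≤ ‖xprev - xdag‖ + ‖xdag - xstar‖ := norm_sub_le_norm_sub_add_norm_sub _ _ _
          _ = ‖xdag - xstar‖ + d0 := by rw [hd0def]; ring
      have ha : d0 ≤ (1 - s) * (‖xdag - xstar‖ + d0) := by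
        have h1 : d0 = ‖xdag - xprev‖ := by rw [hd0def, norm_sub_rev]
        calc d0 = ‖xdag - xprev‖ := h1
          _ ≤ ‖y - xprev‖ := hproj_y
          _ = (1 - s) * ‖xstar - xprev‖ := hny
          _ ≤ (1 - s) * (‖xdag - xstar‖ + d0) :=
            mul_le_mul_of_nonneg_left htri (by linarith)
      -- s * d0 ≤ (1 - s) * R'
      set R' := ‖xdag - xstar‖ with hR'def
      have hR'nn : 0 ≤ R' := norm_nonneg _
      have hsd : s * d0 ≤ (1 - s) * R' := by nlinarith [ha]
      -- multiply by Δ: ε * d0 ≤ (Δ - ε) * R'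
      have hεd : ε * d0 ≤ (Δ - ε) * R' := by
        calc ε * d0 = Δ * (s * d0) := by rw [← hsΔ]; ring
          _ ≤ Δ * ((1 - s) * R') := mul_le_mul_of_nonneg_left hsd hΔ0.le
          _ = (Δ - s * Δ) * R' := by ring
          _ = (Δ - ε) * R' := by rw [hsΔ]
      have hΔub : Δ - ε ≤ εprev := by simp only [hΔdef]; linarith
      have h4 : (Δ - ε) * R' ≤ εprev * R' := mul_le_mul_of_nonneg_right hΔub hR'nn
      have h5 : εprev * R' ≤ εprev * (c * ε ^ θ) := mul_le_mul_of_nonneg_left hR hεprev.le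
      calc d0 * ε = ε * d0 := by ring
        _ ≤ εprev * (c * ε ^ θ) := by linarith
        _ = c * εprev * ε ^ θ := by ring
  -- t lower bound without division: 2 b c D normA * ε^θ ≤ t * ε
  have ht' : 2 * b * c * D * normA * ε ^ θ ≤ t * ε := by
    have h1 : 2 * b * c * D * normA ≤ t * ε ^ (1 - θ) := by
      rw [ge_iff_le, div_le_iff₀ hE'] at ht
      exact ht
    calc 2 * b * c * D * normA * ε ^ θ ≤ (t * ε ^ (1 - θ)) * ε ^ θ :=
          mul_le_mul_of_nonneg_right h1 hE.le
      _ = t * ε := by rw [mul_assoc, hEE]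
  -- main quadratic bound
  have hεpb : εprev = εs * b := by rw [hεsdef]; field_simp
  have key2 : 4 * normA ^ 2 * D ^ 2 * (d0 * ε) ^ 2 ≤ εs ^ 2 * (t * ε) ^ 2 := by
    have h1sq : (d0 * ε) ^ 2 ≤ (c * εprev * ε ^ θ) ^ 2 := by
      have h0 : 0 ≤ d0 * ε := by positivity
      nlinarith [hd0]
    have h2sq : (2 * b * c * D * normA * ε ^ θ) ^ 2 ≤ (t * ε) ^ 2 := by
      have h0 : 0 ≤ 2 * b * c * D * normA * ε ^ θ := by positivity
      nlinarith [ht']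
    calc 4 * normA ^ 2 * D ^ 2 * (d0 * ε) ^ 2
        ≤ 4 * normA ^ 2 * D ^ 2 * (c * εprev * ε ^ θ) ^ 2 :=
          mul_le_mul_of_nonneg_left h1sq (by positivity)
      _ = εs ^ 2 * (2 * b * c * D * normA * ε ^ θ) ^ 2 := by rw [hεpb]; ring
      _ ≤ εs ^ 2 * (t * ε) ^ 2 := mul_le_mul_of_nonneg_left h2sq (by positivity)
  have key : 2 * normA ^ 2 * d0 ^ 2 / (μs * t ^ 2) ≤ εs / 2 := by
    rw [div_le_iff₀ (by positivity), hμs]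
    have hrhs : εs / 2 * (εs / D ^ 2 * t ^ 2) = εs ^ 2 * t ^ 2 / (2 * D ^ 2) := by
      field_simp
    rw [hrhs, le_div_iff₀ (by positivity)]
    nlinarith [key2, mul_pos hε hε]
  have hfinal : F xs - F xdag ≤ εs := by
    calc F xs - F xdag ≤ D ^ 2 * μs / 2 + 2 * normA ^ 2 * d0 ^ 2 / (μs * t ^ 2) := hAPG
      _ ≤ εs / 2 + εs / 2 := by rw [hterm1]; linarith [key]
      _ = εs := by ring
  linarith [hfinal, hmem']
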